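/- arXiv:2001.01654 — 2 statements merged into one kernel-verified Lean document; each statement's English description precedes it below -/
import Mathlib

section
/- The function f₃(z) = z + z³/3 is injective on the closed unit disk, and its derivative f₃'(z) = 1 + z² vanishes exactly at z = ±i on the closed unit disk, with f₃(±i) = ±(2/3)i. -/
open Metric Complex

/-- If `u` has modulus at most 1 and real part `-1`, then `u = -1`. -/
lemma aux_neg_one {u : ℂ} (hu : ‖u‖ ≤ 1) (hre : u.re = -1) : u = -1 := by
  have h1 : u.re ^ 2 + u.im ^ 2 ≤ 1 := by
    have hs := Complex.sq_norm u
    rw [Complex.normSq_apply] at hs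
    nlinarith [norm_nonneg u]
  have him : u.im = 0 := by nlinarith
  apply Complex.ext <;> simp [hre, him]

lemma aux_deriv (z : ℂ) : deriv (fun z : ℂ => z + z ^ 3 / 3) z = 1 + z ^ 2 := by
  have h : HasDerivAt (fun z : ℂ => z + z ^ 3 / 3) (1 + z ^ 2) z := by
    have h1 : HasDerivAt (fun z : ℂ => z + z ^ 3 / 3)
        (1 + (3 : ℕ) * z ^ 2 / 3) z :=
      (hasDerivAt_id z).add ((hasDerivAt_pow 3 z).div_const 3)
    convert h1 using 1
    push_cast
    ring
  exact h.deriv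

/-- The map `f₃(z) = z + z³/3` is injective on the closed unit disk; its derivative is
`f₃'(z) = 1 + z²`, which vanishes on the closed unit disk exactly at `z = ±i`, and
`f₃(±i) = ±(2/3)i`. -/
theorem stmt8 :
    Set.InjOn (fun z : ℂ => z + z ^ 3 / 3) (closedBall (0 : ℂ) 1) ∧
      (∀ z : ℂ, deriv (fun z : ℂ => z + z ^ 3 / 3) z = 1 + z ^ 2) ∧
      (∀ z ∈ closedBall (0 : ℂ) 1,
        (deriv (fun z : ℂ => z + z ^ 3 / 3) z = 0 ↔ z = I ∨ z = -I)) ∧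
      (fun z : ℂ => z + z ^ 3 / 3) I = (2 / 3) * I ∧
      (fun z : ℂ => z + z ^ 3 / 3) (-I) = -((2 / 3) * I) := by
  have hI3 : (I : ℂ) ^ 3 = -I := by
    rw [pow_succ, Complex.I_sq]; ring
  refine ⟨?_, aux_deriv, ?_, ?_, ?_⟩
  · intro z hz w hw heq
    simp only [mem_closedBall_zero_iff] at hz hw
    simp only at heq
    have key : (z - w) * (z ^ 2 + z * w + w ^ 2 + 3) = 0 := by
      linear_combination 3 * heq
    rcases mul_eq_zero.1 key with h | h
    · exact sub_eq_zero.1 h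
    · have hsum : z ^ 2 + z * w + w ^ 2 = -3 := by linear_combination h
      have habs_z2 : ‖z ^ 2‖ ≤ 1 := by
        rw [norm_pow]; exact pow_le_one₀ (norm_nonneg z) hz
      have habs_w2 : ‖w ^ 2‖ ≤ 1 := by
        rw [norm_pow]; exact pow_le_one₀ (norm_nonneg w) hw
      have habs_zw : ‖z * w‖ ≤ 1 := by
        rw [norm_mul]
        exact mul_le_one₀ hz (norm_nonneg w) hw
      have hre : (z ^ 2).re + (z * w).re + (w ^ 2).re = -3 := by
        have := congrArg Complex.re hsum
        simpa using this
      have b1 : -(1:ℝ) ≤ (z ^ 2).re := by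
        have := Complex.abs_re_le_norm (z ^ 2); cases abs_le.1 this; linarith
      have b2 : -(1:ℝ) ≤ (z * w).re := by
        have := Complex.abs_re_le_norm (z * w); cases abs_le.1 this; linarith
      have b3 : -(1:ℝ) ≤ (w ^ 2).re := by
        have := Complex.abs_re_le_norm (w ^ 2); cases abs_le.1 this; linarith
      have e1 : (z ^ 2).re = -1 := by linarith
      have e2 : (z * w).re = -1 := by linarith
      have hz2 : z ^ 2 = -1 := aux_neg_one habs_z2 e1
      have hzw : z * w = -1 := aux_neg_one habs_zw e2
      have hz0 : z ≠ 0 := by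
        intro h0; rw [h0] at hz2; norm_num at hz2
      have : z * (z - w) = 0 := by
        have : z * z - z * w = 0 := by
          rw [hzw]; linear_combination hz2 - sq z
        linear_combination this
      rcases mul_eq_zero.1 this with h' | h'
      · exact absurd h' hz0
      · exact sub_eq_zero.1 h'
  · intro z _
    rw [aux_deriv]
    constructor
    · intro h
      have : (z - I) * (z + I) = 0 := by
        linear_combination h - Complex.I_sq
      rcases mul_eq_zero.1 this with h' | h'
      · exact Or.inl (sub_eq_zero.1 h')
      · exact Or.inr (eq_neg_of_add_eq_zero_left h')
    · rintro (rfl | rfl) <;> simp [Complex.I_sq]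
  · show I + I ^ 3 / 3 = (2 / 3) * I
    linear_combination (1/3 : ℂ) * hI3
  · show -I + (-I) ^ 3 / 3 = -((2 / 3) * I)
    linear_combination (-1/3 : ℂ) * hI3
end

section
/- Let f be continuous on the closed unit disk and holomorphic on the open unit disk with f(0) = q. Then the function F(z,t) = tq + (f(tz) − q)/t (with F(z,0) := f'(0)·z) extends to a jointly continuous function on {|z| ≤ 1} × [−1,1]. -/
open Metric Set

/-- If `f` is continuous on the closed unit disk, holomorphic on the open unit disk,
with `f(0) = q`, then `F(z,t) = tq + (f(tz) − q)/t` (with `F(z,0) := f'(0)·z`) extends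
to a jointly continuous function on `{|z| ≤ 1} × [−1,1]`. -/
theorem stmt12 (f : ℂ → ℂ) (q : ℂ)
    (hfc : ContinuousOn f (closedBall (0 : ℂ) 1))
    (hfd : DifferentiableOn ℂ f (ball (0 : ℂ) 1))
    (hq : f 0 = q) :
    ∃ F : ℂ × ℝ → ℂ,
      ContinuousOn F (closedBall (0 : ℂ) 1 ×ˢ Icc (-1 : ℝ) 1) ∧
      (∀ z ∈ closedBall (0 : ℂ) 1, ∀ t ∈ Icc (-1 : ℝ) 1, t ≠ 0 →
        F (z, t) = (t : ℂ) * q + (f ((t : ℂ) * z) - q) / t) ∧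
      (∀ z ∈ closedBall (0 : ℂ) 1, F (z, 0) = deriv f 0 * z) := by
  set g : ℂ → ℂ := fun w => if w = 0 then deriv f 0 else (f w - q) / w with hgdef
  have hg0 : g 0 = deriv f 0 := by simp [hgdef]
  have hgc : ContinuousOn g (closedBall (0 : ℂ) 1) := by
    intro w hw
    rcases eq_or_ne w 0 with rfl | hw0
    · rw [← continuousWithinAt_diff_self]
      have hd : HasDerivAt f (deriv f 0) 0 :=
        (hfd.differentiableAt (Metric.isOpen_ball.mem_nhds (by simp))).hasDerivAt
      have hslope : Filter.Tendsto (slope f 0) (nhdsWithin 0 {(0:ℂ)}ᶜ) (nhds (deriv f 0)) :=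
        hasDerivAt_iff_tendsto_slope.mp hd
      have hle : nhdsWithin (0:ℂ) (closedBall (0 : ℂ) 1 \ {0}) ≤ nhdsWithin 0 {(0:ℂ)}ᶜ :=
        nhdsWithin_mono _ (by intro x hx; exact hx.2)
      have : Filter.Tendsto g (nhdsWithin (0:ℂ) (closedBall (0 : ℂ) 1 \ {0}))
          (nhds (deriv f 0)) := by
        refine ((hslope.mono_left hle).congr' ?_)
        filter_upwards [self_mem_nhdsWithin] with x hx
        have hx0 : x ≠ 0 := hx.2
        simp [slope, hgdef, hx0, hq, div_eq_inv_mul]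
      rw [ContinuousWithinAt, hg0]
      exact this
    · have hcw : ContinuousWithinAt (fun w => (f w - q) / w) (closedBall (0 : ℂ) 1) w :=
        ((hfc w hw).sub continuousWithinAt_const).div continuousWithinAt_id hw0
      refine hcw.congr_of_eventuallyEq ?_ (by simp [hgdef, hw0])
      filter_upwards [eventually_nhdsWithin_of_eventually_nhds
        (eventually_ne_nhds hw0)] with x hx
      simp [hgdef, hx]
  refine ⟨fun p => (p.2 : ℂ) * q + p.1 * g ((p.2 : ℂ) * p.1), ?_, ?_, ?_⟩
  · have hmap : MapsTo (fun p : ℂ × ℝ => ((p.2 : ℂ)) * p.1)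
        (closedBall (0 : ℂ) 1 ×ˢ Icc (-1 : ℝ) 1) (closedBall (0 : ℂ) 1) := by
      rintro ⟨z, t⟩ ⟨hz, ht⟩
      simp only [mem_closedBall, Complex.dist_eq, sub_zero] at hz ⊢
      rw [norm_mul]
      have h1 : ‖(t : ℂ)‖ ≤ 1 := by
        rw [Complex.norm_real, Real.norm_eq_abs]
        exact abs_le.mpr ⟨ht.1, ht.2⟩
      calc ‖(t:ℂ)‖ * ‖z‖ ≤ 1 * 1 :=
            mul_le_mul h1 hz (norm_nonneg _) zero_le_one
        _ = 1 := one_mul 1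
    have hc1 : Continuous (fun p : ℂ × ℝ => ((p.2 : ℂ)) * p.1) :=
      (Complex.continuous_ofReal.comp continuous_snd).mul continuous_fst
    exact (((Complex.continuous_ofReal.comp continuous_snd).mul
      continuous_const).continuousOn).add
      (continuous_fst.continuousOn.mul (hgc.comp hc1.continuousOn hmap))
  · rintro z hz t ht ht0
    have ht0' : (t : ℂ) ≠ 0 := Complex.ofReal_ne_zero.mpr ht0
    rcases eq_or_ne z 0 with rfl | hz0
    · simp [hq]
    · have : (t : ℂ) * z ≠ 0 := mul_ne_zero ht0' hz0
      simp only [hgdef, this, if_false]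
      field_simp
  · intro z hz
    simp [hg0, mul_comm]
end
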